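/- Assume the stepsizes are uniform, τ_v = τ for all v ∈ V, with τ < ‖A_v‖₂⁻² for every v ∈ V. Then the surrogate functional majorizes the distributed Lasso functional: for all X, C, B ∈ ℝ^{n×|V|}, F^S(X, C, B) ≥ F(X). -/

import Mathlib

open Finset Filter Matrix

/-- Euclidean norm on `ℝ^k`. -/
noncomputable def enorm2 {k : ℕ} (x : Fin k → ℝ) : ℝ := Real.sqrt (∑ i, (x i) ^ 2)

/-- ℓ¹ norm on `ℝ^k`. -/
noncomputable def onenorm {k : ℕ} (x : Fin k → ℝ) : ℝ := ∑ i, |x i|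

/-- Operator norm of a matrix induced by Euclidean norms. -/
noncomputable def opNorm {m n : ℕ} (A : Matrix (Fin m) (Fin n) ℝ) : ℝ :=
  sSup {c : ℝ | ∃ z : Fin n → ℝ, z ≠ 0 ∧ c = enorm2 (A.mulVec z) / enorm2 z}

/-- Soft thresholding operator `η_α`, acting componentwise. -/
noncomputable def eta {k : ℕ} (α : ℝ) (x : Fin k → ℝ) : Fin k → ℝ :=
  fun i => if α < |x i| then Real.sign (x i) * (|x i| - α) else 0

/-- The uniform-weights stochastic matrix adapted to the graph `E`
(`d` is the common degree). -/
noncomputable def Pmat {V : Type*} (E : V → V → Prop) [DecidableRel E] (d : ℕ) :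
    V → V → ℝ := fun u w => if E u w then 1 / (d : ℝ) else 0

/-- Column `v` of `X Pᵀ`, i.e. the `P`-weighted average `∑ w P_{v,w} x_w`. -/
noncomputable def avg {n : ℕ} {V : Type*} [Fintype V] (P : V → V → ℝ)
    (X : V → Fin n → ℝ) : V → Fin n → ℝ := fun v i => ∑ w, P v w * X w i

/-- Frobenius norm of `X ∈ ℝ^{n×|V|}` (columns indexed by `V`). -/
noncomputable def frobNorm {n : ℕ} {V : Type*} [Fintype V] (X : V → Fin n → ℝ) : ℝ :=
  Real.sqrt (∑ v, ∑ i, (X v i) ^ 2)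

/-- The distributed Lasso functional `F`. -/
noncomputable def Flasso {n m : ℕ} {V : Type*} [Fintype V] (P : V → V → ℝ)
    (A : V → Matrix (Fin m) (Fin n) ℝ) (y : V → Fin m → ℝ)
    (q α : ℝ) (τ : V → ℝ) (X : V → Fin n → ℝ) : ℝ :=
  ∑ v, (q * enorm2 (y v - (A v).mulVec (X v)) ^ 2 + (2 * α / τ v) * onenorm (X v)
    + ((1 - q) / τ v) * ∑ w, P v w * enorm2 (avg P X w - X v) ^ 2)

/-- The DISTA operator `Γ`, defined columnwise. -/
noncomputable def Gamma {n m : ℕ} {V : Type*} [Fintype V] (P : V → V → ℝ)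
    (A : V → Matrix (Fin m) (Fin n) ℝ) (y : V → Fin m → ℝ)
    (q α : ℝ) (τ : V → ℝ) (X : V → Fin n → ℝ) : V → Fin n → ℝ :=
  fun v => eta α (fun i =>
    (1 - q) * avg P (avg P X) v i
      + q * (X v i + τ v * ((A v)ᵀ.mulVec (y v - (A v).mulVec (X v)) i)))

/-- The surrogate functional `F^S`. -/
noncomputable def FS {n m : ℕ} {V : Type*} [Fintype V] (E : V → V → Prop) [DecidableRel E]
    (d : ℕ) (A : V → Matrix (Fin m) (Fin n) ℝ) (y : V → Fin m → ℝ)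
    (q α : ℝ) (τ : V → ℝ) (X C B : V → Fin n → ℝ) : ℝ :=
  ∑ v, (q * enorm2 ((A v).mulVec (X v) - y v) ^ 2 + (2 * α / τ v) * onenorm (X v)
    + ((1 - q) / ((d : ℝ) * τ v)) *
        ∑ w ∈ Finset.univ.filter (fun w => E v w), enorm2 (X v - C w) ^ 2
    + (q / τ v) * enorm2 (X v - B v) ^ 2
    - q * enorm2 ((A v).mulVec (X v - B v)) ^ 2)


lemma enorm2_nonneg {k : ℕ} (x : Fin k → ℝ) : 0 ≤ enorm2 x := Real.sqrt_nonneg _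

lemma enorm2_sq {k : ℕ} (x : Fin k → ℝ) : enorm2 x ^ 2 = ∑ i, (x i) ^ 2 := by
  unfold enorm2
  exact Real.sq_sqrt (Finset.sum_nonneg fun _ _ => sq_nonneg _)

lemma enorm2_sub_comm {k : ℕ} (a b : Fin k → ℝ) : enorm2 (a - b) = enorm2 (b - a) := by
  unfold enorm2
  congr 1
  exact Finset.sum_congr rfl fun i _ => by rw [Pi.sub_apply, Pi.sub_apply]; ring

lemma frob_bound {m n : ℕ} (A : Matrix (Fin m) (Fin n) ℝ) (w : Fin n → ℝ) :
    enorm2 (A.mulVec w) ≤ Real.sqrt (∑ i, ∑ j, A i j ^ 2) * enorm2 w := by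
  unfold enorm2
  rw [← Real.sqrt_mul (show (0:ℝ) ≤ ∑ i, ∑ j, A i j ^ 2 from Finset.sum_nonneg fun _ _ => Finset.sum_nonneg fun _ _ => sq_nonneg _)]
  apply Real.sqrt_le_sqrt
  rw [Finset.sum_mul]
  apply Finset.sum_le_sum
  intro i _
  have h := Finset.sum_mul_sq_le_sq_mul_sq Finset.univ (fun j => A i j) w
  simpa [Matrix.mulVec, dotProduct] using h

lemma opNorm_nonneg {m n : ℕ} (A : Matrix (Fin m) (Fin n) ℝ) : 0 ≤ opNorm A := by
  apply Real.sSup_nonneg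
  rintro c ⟨z, hz, rfl⟩
  exact div_nonneg (enorm2_nonneg _) (enorm2_nonneg _)

lemma enorm2_pos_of_ne {k : ℕ} {z : Fin k → ℝ} (hz : z ≠ 0) : 0 < enorm2 z := by
  obtain ⟨i, hi⟩ := Function.ne_iff.mp hz
  unfold enorm2
  apply Real.sqrt_pos.mpr
  apply Finset.sum_pos' (fun _ _ => sq_nonneg _)
  exact ⟨i, Finset.mem_univ i, (pow_pos (abs_pos.mpr hi) 2).trans_eq (sq_abs _)⟩

lemma enorm2_mulVec_le {m n : ℕ} (A : Matrix (Fin m) (Fin n) ℝ) (z : Fin n → ℝ) :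
    enorm2 (A.mulVec z) ≤ opNorm A * enorm2 z := by
  by_cases hz : z = 0
  · subst hz
    have h0 : enorm2 ((0 : Fin n → ℝ)) = 0 := by unfold enorm2; simp
    have h1 : enorm2 (A.mulVec (0 : Fin n → ℝ)) = 0 := by
      rw [Matrix.mulVec_zero]; unfold enorm2; simp
    rw [h0, h1, mul_zero]
  · have hzpos : 0 < enorm2 z := enorm2_pos_of_ne hz
    have hbdd : BddAbove {c : ℝ | ∃ w : Fin n → ℝ, w ≠ 0 ∧ c = enorm2 (A.mulVec w) / enorm2 w} := by
      refine ⟨Real.sqrt (∑ i, ∑ j, A i j ^ 2), ?_⟩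
      rintro c ⟨w, hw, rfl⟩
      rw [div_le_iff₀ (enorm2_pos_of_ne hw)]
      exact frob_bound A w
    have hmem : enorm2 (A.mulVec z) / enorm2 z ∈
        {c : ℝ | ∃ w : Fin n → ℝ, w ≠ 0 ∧ c = enorm2 (A.mulVec w) / enorm2 w} := ⟨z, hz, rfl⟩
    have hle : enorm2 (A.mulVec z) / enorm2 z ≤ opNorm A := le_csSup hbdd hmem
    calc enorm2 (A.mulVec z) = (enorm2 (A.mulVec z) / enorm2 z) * enorm2 z := by
          field_simp
      _ ≤ opNorm A * enorm2 z := mul_le_mul_of_nonneg_right hle hzpos.le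

lemma wvar {V : Type*} [Fintype V] (p : V → ℝ) (hs : ∑ v, p v = 1) (a : V → ℝ) (c : ℝ) :
    ∑ v, p v * (a v - ∑ u, p u * a u) ^ 2 ≤ ∑ v, p v * (a v - c) ^ 2 := by
  set A := ∑ u, p u * a u with hA
  have h : ∀ t : ℝ, ∑ v, p v * (a v - t) ^ 2 = (∑ v, p v * a v ^ 2) - 2 * t * A + t ^ 2 := by
    intro t
    have e : ∀ v, p v * (a v - t) ^ 2 = p v * a v ^ 2 - 2 * t * (p v * a v) + t ^ 2 * p v := by
      intro v; ring
    rw [Finset.sum_congr rfl fun v _ => e v, Finset.sum_add_distrib, Finset.sum_sub_distrib,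
      ← Finset.mul_sum, ← Finset.mul_sum, hs, ← hA]
    ring
  rw [h, h]
  nlinarith [sq_nonneg (A - c)]

/-- Majorization. With uniform stepsizes `τ < ‖A_v‖₂⁻²` for every `v`, the
surrogate functional majorizes the distributed Lasso functional: `F^S(X,C,B) ≥ F(X)` for all
`X`, `C`, `B`. -/
theorem surrogate_majorizes_lasso
    {n m d : ℕ} {V : Type*} [Fintype V] [DecidableEq V] [Nonempty V]
    (E : V → V → Prop) [DecidableRel E]
    (hself : ∀ v, E v v) (hsymm : ∀ u v, E u v → E v u)
    (hreg : ∀ v, (Finset.univ.filter (fun w => E v w)).card = d)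
    (A : V → Matrix (Fin m) (Fin n) ℝ) (y : V → Fin m → ℝ)
    (q α : ℝ) (hq0 : 0 < q) (hq1 : q < 1) (hα : 0 < α)
    (τ : ℝ) (hτpos : 0 < τ)
    (hτ : ∀ v, τ < (opNorm (A v) ^ 2)⁻¹) :
    ∀ X C B : V → Fin n → ℝ,
      Flasso (Pmat E d) A y q α (fun _ => τ) X ≤ FS E d A y q α (fun _ => τ) X C B := by
  intro X C B
  set P := Pmat E d with hPdef
  have hd : 0 < d := by
    obtain ⟨v⟩ := (inferInstance : Nonempty V)
    have hv : v ∈ Finset.univ.filter (fun w => E v w) := by simp [hself v]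
    rw [← hreg v]
    exact Finset.card_pos.mpr ⟨v, hv⟩
  have hdR : (0 : ℝ) < d := by exact_mod_cast hd
  have hPnn : ∀ u w, 0 ≤ P u w := by
    intro u w
    simp only [hPdef, Pmat]
    split <;> positivity
  have hPsymm : ∀ u w, P u w = P w u := by
    intro u w
    have : E u w ↔ E w u := ⟨hsymm u w, hsymm w u⟩
    simp only [hPdef, Pmat, this]
  have hProw : ∀ w, ∑ u, P w u = 1 := by
    intro w
    have : ∑ u, P w u = ∑ u ∈ Finset.univ.filter (fun u => E w u), (1 / (d : ℝ)) := by
      rw [Finset.sum_filter]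
      exact Finset.sum_congr rfl fun u _ => by simp only [hPdef, Pmat]
    rw [this, Finset.sum_const, hreg w, nsmul_eq_mul]
    field_simp
  -- rewrite the neighbor term of FS
  have hNv : ∀ v, ((1 - q) / ((d : ℝ) * τ)) *
      ∑ w ∈ Finset.univ.filter (fun w => E v w), enorm2 (X v - C w) ^ 2
      = ((1 - q) / τ) * ∑ w, P v w * enorm2 (X v - C w) ^ 2 := by
    intro v
    have h1 : ∑ w, P v w * enorm2 (X v - C w) ^ 2
        = ∑ w ∈ Finset.univ.filter (fun w => E v w), (1 / (d : ℝ)) * enorm2 (X v - C w) ^ 2 := by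
      rw [Finset.sum_filter]
      refine Finset.sum_congr rfl fun w _ => ?_
      simp only [hPdef, Pmat, ite_mul, zero_mul]
    rw [h1, ← Finset.mul_sum, ← mul_assoc]
    congr 1
    rw [div_mul_eq_mul_div, mul_one_div, div_div]
  -- quadratic term nonnegativity
  have hbq : ∀ v, 0 ≤ (q / τ) * enorm2 (X v - B v) ^ 2
      - q * enorm2 ((A v).mulVec (X v - B v)) ^ 2 := by
    intro v
    set z := X v - B v with hz
    have h1 := enorm2_mulVec_le (A v) z
    have h2 : enorm2 ((A v).mulVec z) ^ 2 ≤ opNorm (A v) ^ 2 * enorm2 z ^ 2 := by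
      rw [← mul_pow]
      exact pow_le_pow_left₀ (enorm2_nonneg _) h1 2
    have h3 : opNorm (A v) ^ 2 ≤ τ⁻¹ := by
      rcases eq_or_lt_of_le (sq_nonneg (opNorm (A v))) with hs | hs
      · rw [← hs]; positivity
      · have hlt := hτ v
        have h4 : opNorm (A v) ^ 2 * τ < 1 := by
          have := mul_lt_mul_of_pos_left hlt hs
          rwa [mul_inv_cancel₀ (ne_of_gt hs)] at this
        have h5 : τ⁻¹ * τ = 1 := inv_mul_cancel₀ (ne_of_gt hτpos)
        nlinarith
    have h6 : q / τ = q * τ⁻¹ := div_eq_mul_inv q τ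
    nlinarith [sq_nonneg (enorm2 z), mul_le_mul_of_nonneg_left h2 hq0.le,
      mul_le_mul_of_nonneg_right h3 (mul_nonneg hq0.le (sq_nonneg (enorm2 z)))]
  -- key averaging inequality
  have hcnn : 0 ≤ (1 - q) / τ := div_nonneg (by linarith) hτpos.le
  have key : ∑ v, ((1 - q) / τ) * ∑ w, P v w * enorm2 (avg P X w - X v) ^ 2
      ≤ ∑ v, ((1 - q) / τ) * ∑ w, P v w * enorm2 (X v - C w) ^ 2 := by
    rw [← Finset.mul_sum, ← Finset.mul_sum]
    apply mul_le_mul_of_nonneg_left _ hcnn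
    calc ∑ v, ∑ w, P v w * enorm2 (avg P X w - X v) ^ 2
        = ∑ w, ∑ v, P v w * enorm2 (avg P X w - X v) ^ 2 := Finset.sum_comm
      _ ≤ ∑ w, ∑ v, P v w * enorm2 (X v - C w) ^ 2 := by
          apply Finset.sum_le_sum
          intro w _
          have hL : ∑ v, P v w * enorm2 (avg P X w - X v) ^ 2
              = ∑ i, ∑ v, P w v * (X v i - avg P X w i) ^ 2 := by
            rw [Finset.sum_comm]
            refine Finset.sum_congr rfl fun v _ => ?_
            rw [hPsymm v w, enorm2_sq, Finset.mul_sum]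
            refine Finset.sum_congr rfl fun i _ => ?_
            rw [Pi.sub_apply]
            ring
          have hR : ∑ v, P v w * enorm2 (X v - C w) ^ 2
              = ∑ i, ∑ v, P w v * (X v i - C w i) ^ 2 := by
            rw [Finset.sum_comm]
            refine Finset.sum_congr rfl fun v _ => ?_
            rw [hPsymm v w, enorm2_sq, Finset.mul_sum]
            refine Finset.sum_congr rfl fun i _ => ?_
            rw [Pi.sub_apply]
          rw [hL, hR]
          apply Finset.sum_le_sum
          intro i _
          have := wvar (p := P w) (hProw w) (fun v => X v i) (C w i)
          simpa [avg] using this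
      _ = ∑ v, ∑ w, P v w * enorm2 (X v - C w) ^ 2 := Finset.sum_comm
  -- split both functionals
  have hsplitF : Flasso P A y q α (fun _ => τ) X
      = (∑ v, (q * enorm2 ((A v).mulVec (X v) - y v) ^ 2 + (2 * α / τ) * onenorm (X v)))
        + ∑ v, ((1 - q) / τ) * ∑ w, P v w * enorm2 (avg P X w - X v) ^ 2 := by
    unfold Flasso
    rw [← Finset.sum_add_distrib]
    refine Finset.sum_congr rfl fun v _ => ?_
    rw [enorm2_sub_comm (y v) ((A v).mulVec (X v))]
  have hsplitFS : FS E d A y q α (fun _ => τ) X C B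
      = (∑ v, (q * enorm2 ((A v).mulVec (X v) - y v) ^ 2 + (2 * α / τ) * onenorm (X v)))
        + ∑ v, ((1 - q) / τ) * ∑ w, P v w * enorm2 (X v - C w) ^ 2
        + ∑ v, ((q / τ) * enorm2 (X v - B v) ^ 2
            - q * enorm2 ((A v).mulVec (X v - B v)) ^ 2) := by
    unfold FS
    rw [← Finset.sum_add_distrib, ← Finset.sum_add_distrib]
    refine Finset.sum_congr rfl fun v _ => ?_
    rw [← hNv v]
    ring
  have hbqsum : 0 ≤ ∑ v, ((q / τ) * enorm2 (X v - B v) ^ 2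
      - q * enorm2 ((A v).mulVec (X v - B v)) ^ 2) :=
    Finset.sum_nonneg fun v _ => hbq v
  rw [hsplitF, hsplitFS]
  linarith
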